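/- Let A be an abelian category with enough projectives, and let S be a subcategory with S = Fac P(S) such that every projective object admits a left P(S)-approximation. Then P(S) is a support τ-tilting subcategory of A. -/

import Mathlib

open CategoryTheory Limits Opposite

noncomputable section

universe v u

variable {C : Type u} [Category.{v} C] [Abelian C] [EnoughProjectives C]

attribute [local instance] CategoryTheory.Abelian.hasFiniteBiproducts

/-- `Fac M`: quotients of finite direct sums of objects of `M`. -/
def Fac (M : Set C) : Set C :=
  {X | ∃ (n : ℕ) (f : Fin n → C), (∀ i, f i ∈ M) ∧
    haveI : HasBiproductsOfShape (Fin n) C := HasFiniteBiproducts.out n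
    ∃ e : (⨁ f) ⟶ X, Epi e}

/-- Vanishing of `Ext¹(X, Y)`. -/
def ext1Zero (X Y : C) : Prop := Subsingleton (((Ext ℤ C 1).obj (op X)).obj Y)

/-- Vanishing of `Ext²(X, Y)`. -/
def ext2Zero (X Y : C) : Prop := Subsingleton (((Ext ℤ C 2).obj (op X)).obj Y)

/-- `v : P ⟶ V₀` is a left `M`-approximation. -/
def IsLeftApprox (M : Set C) {P V₀ : C} (v : P ⟶ V₀) : Prop :=
  ∀ V' ∈ M, ∀ h : P ⟶ V', ∃ t : V₀ ⟶ V', v ≫ t = h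

/-- `u : U₀ ⟶ X` is a right `M`-approximation. -/
def IsRightApprox (M : Set C) {U₀ X : C} (u : U₀ ⟶ X) : Prop :=
  ∀ M' ∈ M, ∀ h : M' ⟶ X, ∃ t : M' ⟶ U₀, t ≫ u = h

/-- The Ext-projective objects of `S`. -/
def ExtProj (S : Set C) : Set C := {D ∈ S | ∀ Z ∈ S, ext1Zero D Z}

/-- `M` is τ-rigid: `Ext¹(M, Fac M) = 0`. -/
def TauRigid (M : Set C) : Prop := ∀ M₀ ∈ M, ∀ X ∈ Fac M, ext1Zero M₀ X

/-- `P` admits an exact sequence `P ⟶ Ma ⟶ Mb ⟶ 0` with `Ma, Mb ∈ M` and the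
first map a left `M`-approximation. -/
def HasApproxSeq (M : Set C) (P : C) : Prop :=
  ∃ M₀ ∈ M, ∃ M₁ ∈ M, ∃ (m : P ⟶ M₀) (g : M₀ ⟶ M₁) (w : m ≫ g = 0),
    (ShortComplex.mk m g w).Exact ∧ Epi g ∧ IsLeftApprox M m

/-- `M` is a support τ-tilting subcategory. -/
def SupportTauTilting (M : Set C) : Prop :=
  TauRigid M ∧ ∀ P : C, Projective P → HasApproxSeq M P

/-- `0 ⟶ X ⟶ Y ⟶ Z ⟶ 0` is a short exact sequence. -/
def SES {X Y Z : C} (f : X ⟶ Y) (g : Y ⟶ Z) : Prop :=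
  ∃ w : f ≫ g = 0, (ShortComplex.mk f g w).Exact ∧ Mono f ∧ Epi g

/-- `U` is hereditary: `Ext²(U, −) = 0`. -/
def Hereditary1 (U : Set C) : Prop := ∀ U₀ ∈ U, ∀ X : C, ext2Zero U₀ X

/-- `U` is partial tilting. -/
def PartialTilting (U : Set C) : Prop :=
  Hereditary1 U ∧ ∀ U₀ ∈ U, ∀ U₁ ∈ U, ext1Zero U₀ U₁

/-- `U` is tilting. -/
def Tilting (U : Set C) : Prop :=
  PartialTilting U ∧ ∀ P : C, Projective P →
    ∃ Ua ∈ U, ∃ Ub ∈ U, ∃ (i : P ⟶ Ua) (p : Ua ⟶ Ub), SES i p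

/-- `U^⊥₁ = {X | Ext¹(U, X) = 0}`. -/
def Perp1 (U : Set C) : Set C := {X | ∀ U₀ ∈ U, ext1Zero U₀ X}

/-- `M` is closed under finite direct sums and direct summands. -/
def AdditivelyClosed (M : Set C) : Prop :=
  (∀ (n : ℕ) (f : Fin n → C), (∀ i, f i ∈ M) →
    haveI : HasBiproductsOfShape (Fin n) C := HasFiniteBiproducts.out n
    (⨁ f) ∈ M) ∧
  (∀ M₀ ∈ M, ∀ (X : C) (r : M₀ ⟶ X) (s : X ⟶ M₀), s ≫ r = 𝟙 X → X ∈ M)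

/-- The additive closure of a class of objects: direct summands of finite
direct sums of its objects. -/
def AddClosure (X : Set C) : Set C :=
  {Y | ∃ (n : ℕ) (f : Fin n → C), (∀ i, f i ∈ X) ∧
    haveI : HasBiproductsOfShape (Fin n) C := HasFiniteBiproducts.out n
    ∃ (r : (⨁ f) ⟶ Y) (s : Y ⟶ ⨁ f), s ≫ r = 𝟙 Y}

lemma exact_transport {A B D : C} {f f' : A ⟶ B} {g g' : B ⟶ D}
    (hf : f = f') (hg : g = g') {w : f ≫ g = 0} {w' : f' ≫ g' = 0}
    (h : (ShortComplex.mk f g w).Exact) : (ShortComplex.mk f' g' w').Exact := by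
  subst hf; subst hg; exact h

namespace Splice

variable {K Q X : C} (i : K ⟶ Q) (R : ProjectiveResolution K)

/-- The spliced complex  `⋯ → R₁ → R₀ → Q`. -/
def cx : ChainComplex C ℕ :=
  ChainComplex.of
    (fun n => match n with | 0 => Q | (n+1) => R.complex.X n)
    (fun n => match n with | 0 => R.π.f 0 ≫ i | (n+1) => R.complex.d (n+1) n)
    (by
      rintro (_|n)
      · exact (R.complex_d_comp_π_f_zero_assoc i).trans zero_comp
      · simpa using R.complex.d_comp_d (n+3) (n+2) (n+1))

@[simp] lemma cx_X_zero : (cx i R).X 0 = Q := rfl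
@[simp] lemma cx_X_succ (n : ℕ) : (cx i R).X (n+1) = R.complex.X n := rfl
@[simp] lemma cx_d_one_zero : (cx i R).d 1 0 = R.π.f 0 ≫ i := by
  simp [cx, ChainComplex.of.d]
@[simp] lemma cx_d_succ (n : ℕ) : (cx i R).d (n+2) (n+1) = R.complex.d (n+1) n := by
  simp [cx, ChainComplex.of.d]

variable {p : Q ⟶ X} (hip : i ≫ p = 0)

lemma exact_left (hex : (ShortComplex.mk i p hip).Exact) [Mono i] :
    (ShortComplex.mk (R.π.f 0 ≫ i) p
      ((Category.assoc _ _ _).trans ((congrArg (fun t => R.π.f 0 ≫ t) hip).trans comp_zero))).Exact := by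
  let φ : ShortComplex.mk (R.π.f 0 ≫ i) p ((Category.assoc _ _ _).trans ((congrArg (fun t => R.π.f 0 ≫ t) hip).trans comp_zero)) ⟶
      ShortComplex.mk i p hip := ⟨R.π.f 0, 𝟙 _, 𝟙 _, by simp, by simp⟩
  haveI : Epi φ.τ₁ := (inferInstance : Epi (R.π.f 0))
  haveI : IsIso φ.τ₂ := by dsimp [φ]; infer_instance
  haveI : Mono φ.τ₃ := by dsimp [φ]; infer_instance
  exact (ShortComplex.exact_iff_of_epi_of_isIso_of_mono φ).2 hex

lemma exact_one (hex : (ShortComplex.mk i p hip).Exact) [Mono i] :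
    (ShortComplex.mk (R.complex.d 1 0) (R.π.f 0 ≫ i)
      ((R.complex_d_comp_π_f_zero_assoc i).trans zero_comp)).Exact := by
  let φ : ShortComplex.mk (R.complex.d 1 0) (R.π.f 0)
        R.complex_d_comp_π_f_zero ⟶
      ShortComplex.mk (R.complex.d 1 0) (R.π.f 0 ≫ i)
        ((R.complex_d_comp_π_f_zero_assoc i).trans zero_comp) :=
    ⟨𝟙 _, 𝟙 _, i, by simp, by simp⟩
  haveI : Epi φ.τ₁ := by dsimp [φ]; infer_instance
  haveI : IsIso φ.τ₂ := by dsimp [φ]; infer_instance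
  haveI : Mono φ.τ₃ := by dsimp [φ]; infer_instance
  exact (ShortComplex.exact_iff_of_epi_of_isIso_of_mono φ).1 R.exact₀

/-- The spliced resolution of `X`. -/
def res [Projective Q] [Mono i] [Epi p]
    (hex : (ShortComplex.mk i p hip).Exact) : ProjectiveResolution X where
  complex := cx i R
  projective n := by
    match n with
    | 0 => exact (inferInstance : Projective Q)
    | (n+1) => exact R.projective n
  π := (ChainComplex.toSingle₀Equiv _ _).symm
    ⟨p, (cx_d_one_zero i R ▸ (Category.assoc _ _ _).trans ((congrArg (fun t => R.π.f 0 ≫ t) hip).trans comp_zero))⟩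
  quasiIso := ⟨fun n => by
    cases n with
    | zero =>
      rw [ChainComplex.quasiIsoAt₀_iff, ShortComplex.quasiIso_iff_of_zeros']
      · refine (ShortComplex.exact_and_epi_g_iff_of_iso ?_).2
          ⟨exact_left i R hip hex, (inferInstance : Epi p)⟩
        exact ShortComplex.isoMk (Iso.refl _) (Iso.refl _) (Iso.refl _)
          (by erw [Category.id_comp, Category.comp_id]; exact (cx_d_one_zero i R).symm) (by
            erw [Category.id_comp, Category.comp_id]; exact (ChainComplex.toSingle₀Equiv_symm_apply_f_zero (C := cx i R) p _).symm)
      all_goals rfl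
    | succ n =>
      rw [quasiIsoAt_iff_exactAt']
      · rw [HomologicalComplex.exactAt_iff' _ (n+2) (n+1) n (by simp) (by simp)]
        cases n with
        | zero =>
          exact exact_transport (cx_d_succ i R 0).symm (cx_d_one_zero i R).symm
            (exact_one i R hip hex)
        | succ n =>
          exact exact_transport (cx_d_succ i R (n+1)).symm (cx_d_succ i R n).symm
            (R.exact_succ n)
      · apply ChainComplex.exactAt_succ_single_obj⟩

end Splice

lemma subsingleton_iff_isZero {R : Type*} [Ring R] (M : ModuleCat R) :
    Subsingleton M ↔ IsZero M := by
  constructor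
  · intro h; exact ModuleCat.isZero_of_subsingleton M
  · intro h
    refine ⟨fun x y => ?_⟩
    have hid : (𝟙 M : M ⟶ M) = 0 := h.eq_of_src _ _
    calc x = (𝟙 M : M ⟶ M) x := rfl
    _ = (0 : M ⟶ M) x := by rw [hid]
    _ = (𝟙 M : M ⟶ M) y := by rw [hid]; rfl
    _ = y := rfl

lemma ext1Zero_iff {K Q X : C} (i : K ⟶ Q) (p : Q ⟶ X) [Projective Q] [Mono i] [Epi p]
    (hip : i ≫ p = 0) (hex : (ShortComplex.mk i p hip).Exact) (Z : C) :
    ext1Zero X Z ↔ ∀ h : K ⟶ Z, ∃ t : Q ⟶ Z, i ≫ t = h := by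
  have R : ProjectiveResolution K := ProjectiveResolution.of K
  let P : ProjectiveResolution X := Splice.res i R hip hex
  let N := P.complex.linearYonedaObj ℤ Z
  have heq : ext1Zero X Z ↔ IsZero (N.homology 1) := by
    rw [ext1Zero, subsingleton_iff_isZero]
    exact ⟨fun h => h.of_iso (P.isoExt 1 Z).symm, fun h => h.of_iso (P.isoExt 1 Z)⟩
  rw [heq, ← HomologicalComplex.exactAt_iff_isZero_homology,
    HomologicalComplex.exactAt_iff' N 0 1 2 (by simp) (by simp),
    ShortComplex.moduleCat_exact_iff]
  have happg : ∀ (φ : R.complex.X 0 ⟶ Z),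
      (N.sc' 0 1 2).g φ = P.complex.d 2 1 ≫ φ := fun φ => rfl
  have happf : ∀ (ψ : Q ⟶ Z),
      (N.sc' 0 1 2).f ψ = P.complex.d 1 0 ≫ ψ := fun ψ => rfl
  have hd21 : P.complex.d 2 1 = R.complex.d 1 0 := Splice.cx_d_succ i R 0
  have hd10 : P.complex.d 1 0 = R.π.f 0 ≫ i := Splice.cx_d_one_zero i R
  constructor
  · intro hexact h
    have hc : (N.sc' 0 1 2).g (R.π.f 0 ≫ h) = 0 := by
      exact (happg _).trans ((congrArg (· ≫ R.π.f 0 ≫ h) hd21).trans ((R.complex_d_comp_π_f_zero_assoc h).trans zero_comp))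
    obtain ⟨ψ, hψ⟩ := hexact (R.π.f 0 ≫ h) hc
    refine ⟨ψ, ?_⟩
    have : P.complex.d 1 0 ≫ ψ = R.π.f 0 ≫ h := hψ
    replace this : R.π.f 0 ≫ i ≫ ψ = R.π.f 0 ≫ h := (Category.assoc _ _ _).symm.trans ((congrArg (· ≫ ψ) hd10).symm.trans this)
    exact (cancel_epi (R.π.f 0)).1 this
  · intro hl φ hφ
    have hφ' : R.complex.d 1 0 ≫ φ = 0 := by
      have := happg φ
      rw [hφ, hd21] at this
      exact this.symm
    obtain ⟨h, hh⟩ := CokernelCofork.IsColimit.desc' R.isColimitCokernelCofork φ hφ'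
    obtain ⟨t, ht⟩ := hl h
    refine ⟨t, ?_⟩
    refine (happf t).trans ((congrArg (· ≫ t) hd10).trans ((Category.assoc _ _ _).trans ((congrArg (R.π.f 0 ≫ ·) ht).trans ?_)))
    exact hh

section Chase

lemma extend_of_approx (S : Set C) (h1 : S = Fac (ExtProj S))
    {P D : C} (hP : Projective P) (m : P ⟶ D) (happ : IsLeftApprox (ExtProj S) m)
    {Z : C} (hZ : Z ∈ S) (h₁ : kernel (cokernel.π m) ⟶ Z) :
    ∃ s : D ⟶ Z, kernel.ι (cokernel.π m) ≫ s = h₁ := by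
  haveI := hP
  -- `p' : P ⟶ kernel (cokernel.π m)` is epi
  let S0 : ShortComplex C := ShortComplex.mk m (cokernel.π m) (cokernel.condition m)
  have hex0 : S0.Exact := S0.exact_of_g_is_cokernel (cokernelIsCokernel m)
  haveI : Epi S0.toCycles := hex0.epi_toCycles
  let p' : P ⟶ kernel (cokernel.π m) := kernel.lift _ m (cokernel.condition m)
  have hp'ι : p' ≫ kernel.ι (cokernel.π m) = m := kernel.lift_ι _ _ _
  have hfac : S0.toCycles ≫ S0.cyclesIsoKernel.hom = p' := by
    rw [← cancel_mono (kernel.ι (cokernel.π m))]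
    rw [hp'ι, Category.assoc]
    simp [S0, ShortComplex.cyclesIsoKernel]
  haveI hep' : Epi p' := by rw [← hfac]; exact epi_comp _ _
  -- use `Z ∈ Fac (ExtProj S)`
  rw [h1] at hZ
  obtain ⟨n, f, hf, e, he⟩ := hZ
  haveI := he
  let u : P ⟶ ⨁ f := Projective.factorThru (p' ≫ h₁) e
  have hu : u ≫ e = p' ≫ h₁ := Projective.factorThru_comp _ _
  have hv : ∀ j, ∃ t : D ⟶ f j, m ≫ t = u ≫ biproduct.π f j :=
    fun j => happ (f j) (hf j) (u ≫ biproduct.π f j)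
  choose v hvs using hv
  have hmv : m ≫ biproduct.lift v = u := by
    apply biproduct.hom_ext
    intro j
    simp [hvs j]
  refine ⟨biproduct.lift v ≫ e, ?_⟩
  rw [← cancel_epi p', ← Category.assoc, hp'ι, ← Category.assoc, hmv, hu]

lemma ext1Zero_coker (S : Set C) (h1 : S = Fac (ExtProj S))
    {P D : C} (hP : Projective P) (hD : D ∈ ExtProj S) (m : P ⟶ D)
    (happ : IsLeftApprox (ExtProj S) m) {Z : C} (hZ : Z ∈ S) :
    ext1Zero (cokernel m) Z := by
  haveI := hP
  let g : D ⟶ cokernel m := cokernel.π m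
  let πD : Projective.over D ⟶ D := Projective.π D
  let q : Projective.over D ⟶ cokernel m := πD ≫ g
  haveI : Epi q := epi_comp _ _
  have hexq : (ShortComplex.mk (kernel.ι q) q (kernel.condition q)).Exact :=
    ShortComplex.exact_of_f_is_kernel _ (kernelIsKernel q)
  rw [ext1Zero_iff (kernel.ι q) q (kernel.condition q) hexq Z]
  intro h
  -- the lifting property for `D`
  have hexπ : (ShortComplex.mk (kernel.ι πD) πD (kernel.condition πD)).Exact :=
    ShortComplex.exact_of_f_is_kernel _ (kernelIsKernel πD)
  have LD := (ext1Zero_iff (kernel.ι πD) πD (kernel.condition πD) hexπ Z).1 (hD.2 Z hZ)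
  -- maps j and ρ
  let j : kernel πD ⟶ kernel q :=
    kernel.lift q (kernel.ι πD) (by
      show kernel.ι πD ≫ πD ≫ g = 0
      rw [kernel.condition_assoc, Limits.zero_comp])
  have hjk : j ≫ kernel.ι q = kernel.ι πD := kernel.lift_ι _ _ _
  let ρ : kernel q ⟶ kernel g :=
    kernel.lift g (kernel.ι q ≫ πD) (by
      rw [Category.assoc]
      exact kernel.condition q)
  have hρι : ρ ≫ kernel.ι g = kernel.ι q ≫ πD := kernel.lift_ι _ _ _
  -- `ρ` is epi
  haveI hρepi : Epi ρ := by
    let ψ : pullback (kernel.ι g) πD ⟶ kernel q :=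
      kernel.lift q (pullback.snd _ _) (by
        show pullback.snd (kernel.ι g) πD ≫ πD ≫ g = 0
        rw [← pullback.condition_assoc, kernel.condition, comp_zero])
    have hψ : ψ ≫ kernel.ι q = pullback.snd _ _ := kernel.lift_ι _ _ _
    have hψρ : ψ ≫ ρ = pullback.fst _ _ := by
      rw [← cancel_mono (kernel.ι g), Category.assoc, hρι, ← Category.assoc, hψ,
        ← pullback.condition]
    haveI : Epi (ψ ≫ ρ) := by rw [hψρ]; infer_instance
    exact epi_of_epi ψ ρ
  -- exactness of `kernel πD ⟶ kernel q ⟶ kernel g`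
  have wmid : j ≫ ρ = 0 := by
    rw [← cancel_mono (kernel.ι g), Category.assoc, hρι, ← Category.assoc, hjk,
      kernel.condition, Limits.zero_comp]
  have hmid : (ShortComplex.mk j ρ wmid).Exact := by
    apply ShortComplex.exact_of_f_is_kernel
    exact KernelFork.IsLimit.ofι j wmid
      (fun x hx => kernel.lift πD (x ≫ kernel.ι q) (by
        rw [Category.assoc, ← hρι, ← Category.assoc, hx, Limits.zero_comp]))
      (fun x hx => by
        rw [← cancel_mono (kernel.ι q), Category.assoc, hjk, kernel.lift_ι])
      (fun x hx b hb => by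
        rw [← cancel_mono (kernel.ι πD), kernel.lift_ι, ← hjk, ← Category.assoc, hb])
  -- assemble
  obtain ⟨t₀, ht₀⟩ := LD (j ≫ h)
  have hφ : j ≫ (h - kernel.ι q ≫ t₀) = 0 := by
    rw [Preadditive.comp_sub, ← Category.assoc, hjk, ht₀, sub_self]
  let h₁ : kernel g ⟶ Z := hmid.desc (h - kernel.ι q ≫ t₀) hφ
  have hh₁ : ρ ≫ h₁ = h - kernel.ι q ≫ t₀ := hmid.g_desc _ _
  obtain ⟨s, hs⟩ := extend_of_approx S h1 hP m happ hZ h₁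
  refine ⟨t₀ + πD ≫ s, ?_⟩
  rw [Preadditive.comp_add, ← Category.assoc, ← hρι, Category.assoc, hs, hh₁]
  abel

end Chase

theorem stmt7 (S : Set C) (h1 : S = Fac (ExtProj S))
    (h2 : ∀ P : C, Projective P → ∃ D ∈ ExtProj S, ∃ m : P ⟶ D,
      IsLeftApprox (ExtProj S) m) :
    SupportTauTilting (ExtProj S) := by
  constructor
  · intro M₀ hM₀ X hX
    refine hM₀.2 X ?_
    rw [h1]; exact hX
  · intro P hP
    obtain ⟨D, hD, m, happ⟩ := h2 P hP
    refine ⟨D, hD, cokernel m, ⟨?_, ?_⟩, m, cokernel.π m, cokernel.condition m, ?_, ?_, happ⟩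
    · rw [h1]
      refine ⟨1, fun _ => D, fun _ => hD, biproduct.desc (fun _ => cokernel.π m), ?_⟩
      have hι : biproduct.ι (fun _ : Fin 1 => D) 0 ≫ biproduct.desc (fun _ => cokernel.π m) =
          cokernel.π m := biproduct.ι_desc _ _
      haveI : Epi (biproduct.ι (fun _ : Fin 1 => D) 0 ≫
          biproduct.desc (fun _ => cokernel.π m)) := by rw [hι]; infer_instance
      exact epi_of_epi (biproduct.ι (fun _ : Fin 1 => D) 0) _
    · intro Z hZ
      exact ext1Zero_coker S h1 hP hD m happ hZ
    · exact ShortComplex.exact_of_g_is_cokernel _ (cokernelIsCokernel m)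
    · infer_instance
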